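/- For every integer n ≥ 1 and every real number δ with 0 < δ < 1: ∏_{p prime, p² ∣ n, p ≥ n^δ} (⌊v_p(n)/2⌋ + 1) ≤ (1/(2δ) + 1)^{1/(2δ)}. -/

import Mathlib

open scoped Classical in
/-- For `n ≥ 1` and `0 < δ < 1`, the product of `⌊v_p(n)/2⌋ + 1` over primes `p` with
`p² ∣ n` and `p ≥ n^δ` is at most `(1/(2δ) + 1)^{1/(2δ)}`. -/
theorem large_prime_product_bound (n : ℕ) (hn : 1 ≤ n) (δ : ℝ) (hδ0 : 0 < δ)
    (hδ1 : δ < 1) :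
    (∏ p ∈ Finset.filter (fun p : ℕ => p ^ 2 ∣ n ∧ (n : ℝ) ^ δ ≤ (p : ℝ)) n.primeFactors,
        ((n.factorization p / 2 + 1 : ℕ) : ℝ)) ≤
      (1 / (2 * δ) + 1) ^ (1 / (2 * δ)) := by
  have hbase : (1:ℝ) ≤ 1 / (2 * δ) + 1 := by
    have : (0:ℝ) ≤ 1 / (2 * δ) := by positivity
    linarith
  have hexp : (0:ℝ) ≤ 1 / (2 * δ) := by positivity
  rcases eq_or_lt_of_le hn with h1 | h2
  · simp only [← h1]
    simp only [Nat.primeFactors_one, Finset.filter_empty, Finset.prod_empty]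
    exact Real.one_le_rpow hbase hexp
  have hn0 : 0 < n := hn
  have hn1R : (1:ℝ) < n := by exact_mod_cast h2
  have hn0R : (0:ℝ) < n := by positivity
  set F := Finset.filter (fun p : ℕ => p ^ 2 ∣ n ∧ (n : ℝ) ^ δ ≤ (p : ℝ)) n.primeFactors
    with hFdef
  have hsub : F ⊆ n.primeFactors := Finset.filter_subset _ _
  -- divisibility: product of p^2 over F divides n
  have hdvd : ∏ p ∈ F, p ^ 2 ∣ n := by
    have h1 : ∏ p ∈ F, p ^ 2 ∣ ∏ p ∈ F, p ^ n.factorization p := by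
      apply Finset.prod_dvd_prod_of_dvd
      intro p hp
      have hp' := Finset.mem_filter.mp hp
      have hpp : p.Prime := Nat.prime_of_mem_primeFactors hp'.1
      exact pow_dvd_pow p ((Nat.Prime.pow_dvd_iff_le_factorization hpp hn0.ne').mp hp'.2.1)
    have h2' : ∏ p ∈ F, p ^ n.factorization p ∣ ∏ p ∈ n.primeFactors, p ^ n.factorization p :=
      Finset.prod_dvd_prod_of_subset _ _ _ hsub
    have h3 : ∏ p ∈ n.primeFactors, p ^ n.factorization p = n := by
      rw [← Nat.support_factorization]
      exact Nat.factorization_prod_pow_eq_self hn0.ne'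
    exact h1.trans (h2'.trans h3.dvd)
  have hprodle : (∏ p ∈ F, (p:ℝ) ^ 2) ≤ n := by
    exact_mod_cast Nat.le_of_dvd hn0 hdvd
  -- cardinality bound
  have hcard : (F.card : ℝ) ≤ 1 / (2 * δ) := by
    have hlow : ((n:ℝ) ^ δ) ^ 2 * 0 = 0 := by ring
    have h4 : (((n:ℝ) ^ δ) ^ 2) ^ F.card ≤ ∏ p ∈ F, (p:ℝ) ^ 2 := by
      rw [← Finset.prod_const]
      apply Finset.prod_le_prod
      · intro p _; positivity
      · intro p hp
        have hp' := (Finset.mem_filter.mp hp).2.2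
        have : (0:ℝ) ≤ (n:ℝ) ^ δ := by positivity
        exact pow_le_pow_left₀ this hp' 2
    have h5 : (n:ℝ) ^ (δ * 2 * F.card) ≤ (n:ℝ) ^ (1:ℝ) := by
      rw [Real.rpow_one]
      calc (n:ℝ) ^ (δ * 2 * F.card)
          = (((n:ℝ) ^ δ) ^ 2) ^ F.card := by
            rw [← Real.rpow_natCast ((n:ℝ)^δ) 2, ← Real.rpow_natCast _ F.card,
              ← Real.rpow_mul hn0R.le, ← Real.rpow_mul hn0R.le]
            norm_num
        _ ≤ ∏ p ∈ F, (p:ℝ) ^ 2 := h4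
        _ ≤ n := hprodle
    have h6 : δ * 2 * F.card ≤ 1 := (Real.rpow_le_rpow_left_iff hn1R).mp h5
    rw [le_div_iff₀ (by positivity)]
    nlinarith
  -- each factor bound
  have hfac : ∀ p ∈ F, ((n.factorization p / 2 + 1 : ℕ) : ℝ) ≤ 1 / (2 * δ) + 1 := by
    intro p hp
    have hp' := Finset.mem_filter.mp hp
    have hpp : p.Prime := Nat.prime_of_mem_primeFactors hp'.1
    set v := n.factorization p with hv
    have hpv : p ^ v ∣ n := Nat.ordProj_dvd n p
    have hpvle : ((p:ℝ)) ^ v ≤ n := by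
      exact_mod_cast Nat.le_of_dvd hn0 hpv
    have h5 : (n:ℝ) ^ (δ * v) ≤ (n:ℝ) ^ (1:ℝ) := by
      rw [Real.rpow_one]
      calc (n:ℝ) ^ (δ * v) = ((n:ℝ) ^ δ) ^ v := by
            rw [← Real.rpow_natCast ((n:ℝ)^δ) v, ← Real.rpow_mul hn0R.le]
        _ ≤ (p:ℝ) ^ v := by
            apply pow_le_pow_left₀ (by positivity) hp'.2.2
        _ ≤ n := hpvle
    have h6 : δ * v ≤ 1 := (Real.rpow_le_rpow_left_iff hn1R).mp h5
    have h7 : (v:ℝ) ≤ 1 / δ := by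
      rw [le_div_iff₀ hδ0]; nlinarith
    have h8 : ((v / 2 : ℕ) : ℝ) ≤ (v:ℝ) / 2 := Nat.cast_div_le
    have : ((v / 2 + 1 : ℕ) : ℝ) = ((v / 2 : ℕ) : ℝ) + 1 := by push_cast; ring
    rw [this]
    have : (v:ℝ) / 2 ≤ 1 / (2 * δ) := by
      rw [div_le_div_iff₀ (by norm_num) (by positivity)]
      nlinarith
    linarith
  calc (∏ p ∈ F, ((n.factorization p / 2 + 1 : ℕ) : ℝ))
      ≤ ∏ _p ∈ F, (1 / (2 * δ) + 1) :=
        Finset.prod_le_prod (fun p _ => by positivity) hfac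
    _ = (1 / (2 * δ) + 1) ^ F.card := Finset.prod_const _
    _ = (1 / (2 * δ) + 1) ^ ((F.card : ℕ) : ℝ) := (Real.rpow_natCast _ _).symm
    _ ≤ (1 / (2 * δ) + 1) ^ (1 / (2 * δ)) :=
        Real.rpow_le_rpow_of_exponent_le hbase hcard
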